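/- Let G be an edge-colored complete graph containing no monochromatic triangle and no properly colored quadrangle through a fixed vertex v. Partition V(G)∖{v} into color classes V_1,…,V_k according to the color of the edge to v (k ≥ 2 classes), ordered by size. Then every class other than a largest one has size exactly 1; i.e., at most one class has size greater than 1. -/

import Mathlib

/-- An edge-colored graph (with total symmetric coloring `col`) contains a
monochromatic triangle. -/
def HasMonoTriangle {V : Type*} (col : V → V → ℕ) : Prop :=
  ∃ x y z : V, x ≠ y ∧ y ≠ z ∧ x ≠ z ∧ col x y = col y z ∧ col x y = col x z

/-- `c : ZMod ℓ → V` is a properly colored cycle of length `ℓ` in the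
edge-colored complete graph with coloring `col`. -/
def IsPCCycle {V : Type*} {ℓ : ℕ} (col : V → V → ℕ) (c : ZMod ℓ → V) : Prop :=
  Function.Injective c ∧
    ∀ i : ZMod ℓ, col (c i) (c (i + 1)) ≠ col (c (i + 1)) (c (i + 2))

/-- There is a properly colored cycle of length `ℓ` through `v`. -/
def PCThrough {V : Type*} (col : V → V → ℕ) (ℓ : ℕ) (v : V) : Prop :=
  ∃ c : ZMod ℓ → V, IsPCCycle col c ∧ ∃ i, c i = v

/-- `S` is a degenerate set of the edge-colored complete graph `col`. -/
def DegenSet {V : Type*} (col : V → V → ℕ) (S : Set V) : Prop :=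
  S.Nonempty ∧ ∃ f : V → ℕ,
    (∀ u ∈ S, ∀ v ∈ S, u ≠ v → col u v = f u ∨ col u v = f v) ∧
    (∀ u ∈ S, ∀ v, v ∉ S → col u v = f u)

lemma pc_quad {V : Type*} (col : V → V → ℕ) (p q r s : V)
    (hpq : p ≠ q) (hpr : p ≠ r) (hps : p ≠ s) (hqr : q ≠ r) (hqs : q ≠ s) (hrs : r ≠ s)
    (h0 : col p q ≠ col q r) (h1 : col q r ≠ col r s)
    (h2 : col r s ≠ col s p) (h3 : col s p ≠ col p q) :
    PCThrough col 4 p := by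
  refine ⟨fun i => ![p, q, r, s] i, ⟨?_, ?_⟩, 0, rfl⟩
  · intro i j hij
    fin_cases i <;> fin_cases j <;> simp_all <;> rfl
  · intro i
    fin_cases i <;> simp_all <;> tauto

lemma cross_eq {V : Type*} (col : V → V → ℕ)
    (hsym : ∀ u v, col u v = col v u)
    (hmono : ¬ HasMonoTriangle col)
    (v : V) (hnoquad : ¬ PCThrough col 4 v)
    (a b : ℕ) (hab : a ≠ b)
    (x x' y y' : V)
    (hxv : x ≠ v) (hx'v : x' ≠ v) (hyv : y ≠ v) (hy'v : y' ≠ v)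
    (hxa : col v x = a) (hx'a : col v x' = a)
    (hyb : col v y = b) (hy'b : col v y' = b)
    (hxx' : x ≠ x') (hyy' : y ≠ y') :
    col x y = col x x' := by
  have hxy : x ≠ y := fun h => hab (hxa ▸ hyb ▸ congrArg (col v) h)
  have hx'y : x' ≠ y := fun h => hab (hx'a ▸ hyb ▸ congrArg (col v) h)
  have hxy' : x ≠ y' := fun h => hab (hxa ▸ hy'b ▸ congrArg (col v) h)
  have hd : col x x' ≠ a := fun h =>
    hmono ⟨v, x, x', Ne.symm hxv, hxx', Ne.symm hx'v, by rw [hxa, h], by rw [hxa, hx'a]⟩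
  have he : col y y' ≠ b := fun h =>
    hmono ⟨v, y, y', Ne.symm hyv, hyy', Ne.symm hy'v, by rw [hyb, h], by rw [hyb, hy'b]⟩
  -- step 1 : col x y = b ∨ col x y = col x x'
  have step1 : col x y = b ∨ col x y = col x x' := by
    by_contra h
    push_neg at h
    obtain ⟨hcb, hcd⟩ := h
    apply hnoquad
    refine pc_quad col v x' x y (Ne.symm hx'v) (Ne.symm hxv) (Ne.symm hyv)
      (Ne.symm hxx') hx'y hxy ?_ ?_ ?_ ?_
    · rw [hx'a, hsym x' x]; exact fun h => hd h.symm
    · rw [hsym x' x]; exact fun h => hcd h.symm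
    · rw [hsym y v, hyb]; exact hcb
    · rw [hsym y v, hyb, hx'a]; exact Ne.symm hab
  -- step 2 : col x y = a ∨ col x y = col y y'
  have step2 : col x y = a ∨ col x y = col y y' := by
    by_contra h
    push_neg at h
    obtain ⟨hca, hce⟩ := h
    apply hnoquad
    refine pc_quad col v y' y x (Ne.symm hy'v) (Ne.symm hyv) (Ne.symm hxv)
      (Ne.symm hyy') (Ne.symm hxy') (Ne.symm hxy) ?_ ?_ ?_ ?_
    · rw [hy'b, hsym y' y]; exact fun h => he h.symm
    · rw [hsym y' y, hsym y x]; exact fun h => hce h.symm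
    · rw [hsym x v, hxa, hsym y x]; exact hca
    · rw [hsym x v, hxa, hy'b]; exact hab
  rcases step1 with h1 | h1
  · rcases step2 with h2 | h2
    · exact absurd (h1 ▸ h2 : b = a) (Ne.symm hab)
    · exact absurd (h1 ▸ h2 : b = col y y') (Ne.symm he)
  · exact h1

/-- If no PC quadrangle passes through $v$ and there is no monochromatic
triangle, then at most one color class of the neighborhood of $v$ has more
than one vertex. -/
theorem at_most_one_large_color_class
    {V : Type*} [Fintype V] [DecidableEq V] (col : V → V → ℕ)
    (hsym : ∀ u v, col u v = col v u)
    (hmono : ¬ HasMonoTriangle col)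
    (v : V) (hnoquad : ¬ PCThrough col 4 v)
    (a b : ℕ) (hab : a ≠ b) :
    ¬ (2 ≤ (Finset.univ.filter fun u => u ≠ v ∧ col v u = a).card ∧
       2 ≤ (Finset.univ.filter fun u => u ≠ v ∧ col v u = b).card) := by
  rintro ⟨ha, hb⟩
  obtain ⟨x1, hx1, x2, hx2, hx12⟩ := Finset.one_lt_card.mp ha
  obtain ⟨y1, hy1, y2, hy2, hy12⟩ := Finset.one_lt_card.mp hb
  simp only [Finset.mem_filter, Finset.mem_univ, true_and] at hx1 hx2 hy1 hy2
  obtain ⟨hx1v, hx1a⟩ := hx1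
  obtain ⟨hx2v, hx2a⟩ := hx2
  obtain ⟨hy1v, hy1b⟩ := hy1
  obtain ⟨hy2v, hy2b⟩ := hy2
  have h1 : col x1 y1 = col x1 x2 :=
    cross_eq col hsym hmono v hnoquad a b hab x1 x2 y1 y2
      hx1v hx2v hy1v hy2v hx1a hx2a hy1b hy2b hx12 hy12
  have h2 : col x2 y1 = col x2 x1 :=
    cross_eq col hsym hmono v hnoquad a b hab x2 x1 y1 y2
      hx2v hx1v hy1v hy2v hx2a hx1a hy1b hy2b (Ne.symm hx12) hy12
  have hx2y1 : x2 ≠ y1 := fun h => hab (hx2a ▸ hy1b ▸ congrArg (col v) h)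
  have hx1y1 : x1 ≠ y1 := fun h => hab (hx1a ▸ hy1b ▸ congrArg (col v) h)
  exact hmono ⟨x1, x2, y1, hx12, hx2y1, hx1y1,
    by rw [h2, hsym x2 x1], h1.symm⟩
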